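/- Let L be a finite set with at least 2 elements, and for each partition ξ of L let D(ξ) denote the set of ξ-uncorrelated states. Then for partitions υ and ξ, υ refines ξ if and only if D(υ) ⊆ D(ξ). (Abstract version: the map from the refinement lattice of partitions to state sets via tensor-product structure is an order embedding.) -/

import Mathlib

open scoped ComplexOrder
open Matrix Finset

lemma aux_sum3_rot {α M : Type*} [Fintype α] [AddCommMonoid M] (F : α → α → α → M) :
    ∑ a, ∑ b, ∑ k, F a b k = ∑ k, ∑ a, ∑ b, F a b k :=
  calc ∑ a, ∑ b, ∑ k, F a b k = ∑ a, ∑ k, ∑ b, F a b k :=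
        Finset.sum_congr rfl (fun _ _ => Finset.sum_comm)
    _ = ∑ k, ∑ a, ∑ b, F a b k := Finset.sum_comm

/-- Schur product theorem. -/
lemma aux_psd_hadamard {ι : Type*} [Fintype ι] [DecidableEq ι]
    {M N : Matrix ι ι ℂ} (hM : M.PosSemidef) (hN : N.PosSemidef) :
    (Matrix.of fun a b => M a b * N a b).PosSemidef := by
  exact hM.hadamard hN

open scoped ComplexOrder
open Matrix Finset

/-- rank-one matrices are PSD -/
lemma aux_psd_outer {ι : Type*} [Fintype ι] (ψ : ι → ℂ) :
    (Matrix.of fun a b => ψ a * (starRingEnd ℂ) (ψ b)).PosSemidef := by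
  have : (Matrix.of fun a b => ψ a * (starRingEnd ℂ) (ψ b))
      = (Matrix.of fun (_ : Unit) b => (starRingEnd ℂ) (ψ b))ᴴ *
        (Matrix.of fun (_ : Unit) b => (starRingEnd ℂ) (ψ b)) := by
    ext a b
    simp [Matrix.mul_apply, mul_comm]
  rw [this]
  exact Matrix.posSemidef_conjTranspose_mul_self _

/-- entrywise products of PSD matrices are PSD -/
lemma aux_psd_prod {ι J : Type*} [Fintype ι] [DecidableEq ι] [DecidableEq J]
    (s : Finset J) (F : J → Matrix ι ι ℂ) (h : ∀ j ∈ s, (F j).PosSemidef) :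
    (Matrix.of fun a b => ∏ j ∈ s, F j a b).PosSemidef := by
  induction s using Finset.induction with
  | empty =>
      simp only [Finset.prod_empty]
      have : (Matrix.of fun (_ _ : ι) => (1 : ℂ))
          = (1 : Matrix Unit Unit ℂ).submatrix (fun _ => ()) (fun _ => ()) := by
        ext a b; simp
      rw [this]
      exact Matrix.PosSemidef.submatrix Matrix.PosSemidef.one _
  | @insert j s' hj ih =>
      have h1 : (Matrix.of fun a b => ∏ k ∈ s', F k a b).PosSemidef :=
        ih fun k hk => h k (Finset.mem_insert_of_mem hk)
      have h2 := aux_psd_hadamard (h j (Finset.mem_insert_self j s')) h1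
      convert h2 using 2
      ext a b
      simp [Finset.prod_insert hj]
open Finset

/-- The equivalence between functions on `ι` and tuples of functions on the
blocks of a partition of `ι`. -/
noncomputable def auxPartEquiv {ι : Type*} [Fintype ι] [DecidableEq ι] {κ : ι → Type*}
    {J : Type*} (s : Finset J) (B : J → Finset ι)
    (hdisj : ∀ j ∈ s, ∀ j' ∈ s, j ≠ j' → Disjoint (B j) (B j'))
    (hcov : ∀ i : ι, ∃ j ∈ s, i ∈ B j) :
    (∀ i, κ i) ≃ ((j : {x // x ∈ s}) → (i : {x // x ∈ B j.1}) → κ i.1) where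
  toFun a := fun j i => a i.1
  invFun g := fun i => g ⟨(hcov i).choose, (hcov i).choose_spec.1⟩ ⟨i, (hcov i).choose_spec.2⟩
  left_inv a := rfl
  right_inv g := by
    have key : ∀ (j1 j2 : J) (h1 : j1 ∈ s) (h2 : j2 ∈ s), j1 = j2 →
        ∀ (i : ι) (m1 : i ∈ B j1) (m2 : i ∈ B j2),
        g ⟨j1, h1⟩ ⟨i, m1⟩ = g ⟨j2, h2⟩ ⟨i, m2⟩ := by
      rintro j1 j2 h1 h2 rfl i m1 m2; rfl
    funext j i
    refine key _ _ _ _ ?_ _ _ _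
    by_contra hne
    exact Finset.disjoint_left.mp
      (hdisj _ (hcov i.1).choose_spec.1 _ j.2 hne) (hcov i.1).choose_spec.2 i.2

lemma aux_sum_prod_partition {ι : Type*} [Fintype ι] [DecidableEq ι] {κ : ι → Type*}
    [∀ i, Fintype (κ i)] [∀ i, DecidableEq (κ i)]
    {J : Type*} [DecidableEq J] (s : Finset J) (B : J → Finset ι)
    (hdisj : ∀ j ∈ s, ∀ j' ∈ s, j ≠ j' → Disjoint (B j) (B j'))
    (hcov : ∀ i : ι, ∃ j ∈ s, i ∈ B j)
    (f : (j : J) → ((i : {x // x ∈ B j}) → κ i.1) → ℂ) :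
    ∑ a : (∀ i, κ i), ∏ j ∈ s, f j (fun i => a i.1)
      = ∏ j ∈ s, ∑ u : ((i : {x // x ∈ B j}) → κ i.1), f j u := by
  classical
  let E := auxPartEquiv s B hdisj hcov (κ := κ)
  have step1 : ∑ a : (∀ i, κ i), ∏ j ∈ s, f j (fun i => a i.1)
      = ∑ g : ((j : {x // x ∈ s}) → (i : {x // x ∈ B j.1}) → κ i.1),
          ∏ j ∈ s.attach, f j.1 (g j) := by
    rw [← Equiv.sum_comp E (fun g => ∏ j ∈ s.attach, f j.1 (g j))]
    exact Finset.sum_congr rfl fun a _ =>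
      (Finset.prod_attach s (fun j => f j (fun i => a i.1))).symm
  rw [step1]
  rw [← Finset.prod_attach s (fun j => ∑ u : ((i : {x // x ∈ B j}) → κ i.1), f j u)]
  rw [show (s.attach : Finset {x // x ∈ s}) = Finset.univ from (Finset.univ_eq_attach s).symm]
  rw [← Fintype.piFinset_univ, ← Finset.prod_univ_sum]


section Main


open scoped BigOperators ComplexOrder

variable {n : ℕ} {d : Fin n → ℕ}

/-- A density operator `ρ` on `⊗_{i} ℂ^{d i}` is `ξ`-uncorrelated for a
partition `ξ` of `{1,…,n}` if it is a tensor product of density operators of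
the parts of `ξ`. -/
def IsUncorrelated (d : Fin n → ℕ) (ξ : Finpartition (Finset.univ : Finset (Fin n)))
    (ρ : Matrix (∀ i, Fin (d i)) (∀ i, Fin (d i)) ℂ) : Prop :=
  ∃ σ : (X : Finset (Fin n)) →
      Matrix ((i : X) → Fin (d i)) ((i : X) → Fin (d i)) ℂ,
    (∀ X ∈ ξ.parts, (σ X).PosSemidef ∧ (σ X).trace = 1) ∧
    ∀ a b, ρ a b = ∏ X ∈ ξ.parts, σ X (fun i => a i.1) (fun i => b i.1)

/-- The set of `ξ`-uncorrelated states. -/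
def uncorrelatedStates (d : Fin n → ℕ)
    (ξ : Finpartition (Finset.univ : Finset (Fin n))) :
    Set (Matrix (∀ i, Fin (d i)) (∀ i, Fin (d i)) ℂ) :=
  {ρ | ρ.PosSemidef ∧ ρ.trace = 1 ∧ IsUncorrelated d ξ ρ}

lemma aux_forward (hd : ∀ i, 0 < d i)
    (υ ξ : Finpartition (Finset.univ : Finset (Fin n))) (h : υ ≤ ξ) :
    uncorrelatedStates d υ ⊆ uncorrelatedStates d ξ := by
  classical
  rintro ρ ⟨hpsd, htr, σ, hσ, hent⟩
  refine ⟨hpsd, htr, ?_⟩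
  set r : (X Y : Finset (Fin n)) → ((i : X) → Fin (d i)) → ((i : Y) → Fin (d i)) :=
    fun X Y a i => if h' : i.1 ∈ X then a ⟨i.1, h'⟩ else ⟨0, hd i.1⟩ with hr
  refine ⟨fun X => Matrix.of fun a b =>
    ∏ Y ∈ υ.parts.filter (· ⊆ X), σ Y (r X Y a) (r X Y b), fun X hX => ⟨?_, ?_⟩, ?_⟩
  · -- PSD
    exact aux_psd_prod _ (fun Y => (σ Y).submatrix (r X Y) (r X Y))
      (fun Y hY => ((hσ Y (Finset.mem_filter.mp hY).1).1).submatrix _)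
  · -- trace
    set ar : (Y : Finset (Fin n)) →
        ((i : {x // x ∈ Finset.subtype (· ∈ X) Y}) → Fin (d i.1.1)) →
        ((i : Y) → Fin (d i.1)) :=
      fun Y u i => if h1 : i.1 ∈ X then
        (if h2 : (⟨i.1, h1⟩ : {x // x ∈ X}) ∈ Finset.subtype (· ∈ X) Y then u ⟨⟨i.1, h1⟩, h2⟩
          else ⟨0, hd i.1⟩) else ⟨0, hd i.1⟩ with har
    have hdisjB : ∀ Y ∈ υ.parts.filter (· ⊆ X), ∀ Y' ∈ υ.parts.filter (· ⊆ X), Y ≠ Y' →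
        Disjoint (Finset.subtype (· ∈ X) Y) (Finset.subtype (· ∈ X) Y') := by
      intro Y hY Y' hY' hne
      rw [Finset.disjoint_left]
      intro i hi hi'
      exact Finset.disjoint_left.mp
        (υ.disjoint (Finset.mem_filter.mp hY).1 (Finset.mem_filter.mp hY').1 hne)
        (Finset.mem_subtype.mp hi) (Finset.mem_subtype.mp hi')
    have hcovB : ∀ i : {x // x ∈ X}, ∃ Y ∈ υ.parts.filter (· ⊆ X),
        i ∈ Finset.subtype (· ∈ X) Y := by
      intro i
      obtain ⟨Y, hYp, hiY⟩ := υ.exists_mem (Finset.mem_univ i.1)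
      obtain ⟨X', hX', hYX'⟩ := h hYp
      have hXX : X' = X := ξ.eq_of_mem_parts hX' hX (hYX' hiY) i.2
      exact ⟨Y, Finset.mem_filter.mpr ⟨hYp, hXX ▸ hYX'⟩, Finset.mem_subtype.mpr hiY⟩
    have key := aux_sum_prod_partition (ι := {x // x ∈ X}) (κ := fun i => Fin (d i.1))
      (s := υ.parts.filter (· ⊆ X)) (B := fun Y => Finset.subtype (· ∈ X) Y)
      (f := fun Y u => σ Y (ar Y u) (ar Y u)) hdisjB hcovB
    calc (Matrix.of fun a b =>
        ∏ Y ∈ υ.parts.filter (· ⊆ X), σ Y (r X Y a) (r X Y b)).trace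
        = ∑ a : (i : X) → Fin (d i), ∏ Y ∈ υ.parts.filter (· ⊆ X),
            σ Y (r X Y a) (r X Y a) := by rw [Matrix.trace]; rfl
      _ = ∑ a : (i : X) → Fin (d i), ∏ Y ∈ υ.parts.filter (· ⊆ X),
            σ Y (ar Y (fun i => a i.1)) (ar Y (fun i => a i.1)) := by
          refine Finset.sum_congr rfl fun a _ => Finset.prod_congr rfl fun Y hY => ?_
          have harg : ar Y (fun i => a i.1) = r X Y a := by
            funext i
            have hx : i.1 ∈ X := (Finset.mem_filter.mp hY).2 i.2
            rw [har, hr]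
            simp only
            rw [dif_pos hx, dif_pos hx]
            have hmem : (⟨i.1, hx⟩ : {x // x ∈ X}) ∈ Finset.subtype (· ∈ X) Y :=
              Finset.mem_subtype.mpr i.2
            rw [dif_pos hmem]
          rw [harg]
      _ = ∏ Y ∈ υ.parts.filter (· ⊆ X),
            ∑ u : (i : {x // x ∈ Finset.subtype (· ∈ X) Y}) → Fin (d i.1.1),
              σ Y (ar Y u) (ar Y u) := key
      _ = 1 := by
          refine Finset.prod_eq_one fun Y hY => ?_
          obtain ⟨hYp, hYX⟩ := Finset.mem_filter.mp hY
          let E2 : ((i : {x // x ∈ Finset.subtype (· ∈ X) Y}) → Fin (d i.1.1))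
              ≃ ((i : Y) → Fin (d i.1)) :=
            { toFun := fun u i => u ⟨⟨i.1, hYX i.2⟩, Finset.mem_subtype.mpr i.2⟩
              invFun := fun v i => v ⟨i.1.1, Finset.mem_subtype.mp i.2⟩
              left_inv := fun u => rfl
              right_inv := fun v => rfl }
          have hE : ∀ u, ar Y u = E2 u := by
            intro u
            funext i
            have hx : i.1 ∈ X := hYX i.2
            rw [har]
            simp only
            rw [dif_pos hx]
            have hmem : (⟨i.1, hx⟩ : {x // x ∈ X}) ∈ Finset.subtype (· ∈ X) Y :=
              Finset.mem_subtype.mpr i.2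
            rw [dif_pos hmem]
            rfl
          calc ∑ u : (i : {x // x ∈ Finset.subtype (· ∈ X) Y}) → Fin (d i.1.1),
              σ Y (ar Y u) (ar Y u)
              = ∑ u, σ Y (E2 u) (E2 u) := by
                refine Finset.sum_congr rfl fun u _ => ?_
                rw [hE u]
            _ = ∑ v, σ Y v v := Equiv.sum_comp E2 (fun v => σ Y v v)
            _ = 1 := (hσ Y hYp).2
  · -- entries
    intro a b
    rw [hent a b]
    have hbi : ξ.parts.biUnion (fun X => υ.parts.filter (· ⊆ X)) = υ.parts := by
      ext Y
      simp only [Finset.mem_biUnion, Finset.mem_filter]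
      constructor
      · rintro ⟨X, _, hYp, _⟩; exact hYp
      · intro hYp
        obtain ⟨X, hX, hYX⟩ := h hYp
        exact ⟨X, hX, hYp, hYX⟩
    have hdisj2 : (↑ξ.parts : Set (Finset (Fin n))).PairwiseDisjoint
        (fun X => υ.parts.filter (· ⊆ X)) := by
      intro X hX X' hX' hne
      rw [Function.onFun, Finset.disjoint_left]
      intro Y hY hY'
      obtain ⟨k, hk⟩ := υ.nonempty_of_mem_parts (Finset.mem_filter.mp hY).1
      exact Finset.disjoint_left.mp (ξ.disjoint hX hX' hne)
        ((Finset.mem_filter.mp hY).2 hk) ((Finset.mem_filter.mp hY').2 hk)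
    conv_lhs => rw [← hbi]
    rw [Finset.prod_biUnion hdisj2]
    refine Finset.prod_congr rfl fun X hX => Finset.prod_congr rfl fun Y hY => ?_
    obtain ⟨hYp, hYX⟩ := Finset.mem_filter.mp hY
    have h1 : r X Y (fun i : X => a i.1) = fun i : Y => a i.1 := by
      funext i
      rw [hr]
      simp only
      rw [dif_pos (hYX i.2)]
    have h2 : r X Y (fun i : X => b i.1) = fun i : Y => b i.1 := by
      funext i
      rw [hr]
      simp only
      rw [dif_pos (hYX i.2)]
    rw [h1, h2]

lemma aux_backward (hd : ∀ i, 1 < d i)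
    (υ ξ : Finpartition (Finset.univ : Finset (Fin n)))
    (hsub : uncorrelatedStates d υ ⊆ uncorrelatedStates d ξ) : υ ≤ ξ := by
  classical
  intro Y0 hY0
  by_contra hno
  push_neg at hno
  have pos : ∀ i, 0 < d i := fun i => Nat.lt_trans Nat.zero_lt_one (hd i)
  set c : ℂ := ((Real.sqrt 2 : ℝ) : ℂ)⁻¹ with hcdef
  set z0 : (Y : Finset (Fin n)) → (i : Y) → Fin (d i) := fun Y i => ⟨0, pos i.1⟩ with hz0
  set z1 : (Y : Finset (Fin n)) → (i : Y) → Fin (d i) := fun Y i => ⟨1, hd i.1⟩ with hz1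
  set g : (Y : Finset (Fin n)) → ((i : Y) → Fin (d i)) → ℂ :=
    fun Y u => if u = z0 Y ∨ u = z1 Y then c else 0 with hg
  set ψ : ((i : Fin n) → Fin (d i)) → ℂ :=
    fun a => ∏ Y ∈ υ.parts, g Y (fun i => a i.1) with hψ
  have hsqrt : Real.sqrt 2 ≠ 0 := ne_of_gt (Real.sqrt_pos.mpr (by norm_num))
  have hcne : c ≠ 0 := by
    rw [hcdef]
    exact inv_ne_zero (Complex.ofReal_ne_zero.mpr hsqrt)
  have hcc : c * (starRingEnd ℂ) c = 2⁻¹ := by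
    rw [hcdef, map_inv₀, Complex.conj_ofReal, ← mul_inv, ← Complex.ofReal_mul,
      Real.mul_self_sqrt (by norm_num : (0:ℝ) ≤ 2)]
    norm_num
  have hgsum : ∀ Y : Finset (Fin n), Y.Nonempty →
      ∑ u : (i : Y) → Fin (d i), g Y u * (starRingEnd ℂ) (g Y u) = 1 := by
    intro Y hYne
    obtain ⟨k, hk⟩ := hYne
    have hne : z0 Y ≠ z1 Y := by
      intro hcontra
      have h' := congrFun hcontra ⟨k, hk⟩
      rw [hz0, hz1] at h'
      simp [Fin.ext_iff] at h'
    have hsummand : ∀ u : (i : Y) → Fin (d i), g Y u * (starRingEnd ℂ) (g Y u)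
        = (if u = z0 Y then (2:ℂ)⁻¹ else 0) + (if u = z1 Y then (2:ℂ)⁻¹ else 0) := by
      intro u
      rw [hg]
      simp only
      by_cases h0 : u = z0 Y <;> by_cases h1 : u = z1 Y
      · exact absurd (h0.symm.trans h1) hne
      · simp [h0, h1, hcc]
        exact hne
      · simp [h0, h1, hcc]
        exact fun hh => hne hh.symm
      · simp [h0, h1]
    rw [Finset.sum_congr rfl fun u _ => hsummand u, Finset.sum_add_distrib,
      Finset.sum_ite_eq' Finset.univ (z0 Y) (fun _ => (2:ℂ)⁻¹),
      Finset.sum_ite_eq' Finset.univ (z1 Y) (fun _ => (2:ℂ)⁻¹)]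
    simp
    norm_num
  set ρ : Matrix ((i : Fin n) → Fin (d i)) ((i : Fin n) → Fin (d i)) ℂ :=
    Matrix.of (fun a b => ψ a * (starRingEnd ℂ) (ψ b)) with hρ
  have hρmem : ρ ∈ uncorrelatedStates d υ := by
    refine ⟨aux_psd_outer ψ, ?_, ?_⟩
    · have ht : ρ.trace = ∑ a : (i : Fin n) → Fin (d i), ψ a * (starRingEnd ℂ) (ψ a) := by
        rw [Matrix.trace]; rfl
      rw [ht]
      have hexp : ∀ a, ψ a * (starRingEnd ℂ) (ψ a)
          = ∏ Y ∈ υ.parts,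
              (g Y (fun i => a i.1) * (starRingEnd ℂ) (g Y (fun i => a i.1))) := by
        intro a
        rw [hψ]
        simp only
        rw [map_prod, Finset.prod_mul_distrib]
      rw [Finset.sum_congr rfl fun a _ => hexp a]
      rw [aux_sum_prod_partition (ι := Fin n) (κ := fun i => Fin (d i)) (s := υ.parts)
        (B := fun Y => Y) (f := fun Y u => g Y u * (starRingEnd ℂ) (g Y u))
        (fun Y hY Y' hY' hne => υ.disjoint hY hY' hne)
        (fun i => υ.exists_mem (Finset.mem_univ i))]
      exact Finset.prod_eq_one fun Y hY => hgsum Y (υ.nonempty_of_mem_parts hY)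
    · refine ⟨fun Y => Matrix.of fun u v => g Y u * (starRingEnd ℂ) (g Y v),
        fun Y hY => ⟨aux_psd_outer _, ?_⟩, ?_⟩
      · have ht : (Matrix.of fun u v => g Y u * (starRingEnd ℂ) (g Y v)).trace
            = ∑ u : (i : Y) → Fin (d i), g Y u * (starRingEnd ℂ) (g Y u) := by
          rw [Matrix.trace]; rfl
        rw [ht]
        exact hgsum Y (υ.nonempty_of_mem_parts hY)
      · intro a b
        rw [hρ]
        simp only [Matrix.of_apply]
        rw [hψ]
        simp only
        rw [map_prod]
        exact (Finset.prod_mul_distrib).symm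
  obtain ⟨-, -, τ, -, hτ⟩ := hsub hρmem
  obtain ⟨i0, hi0⟩ := υ.nonempty_of_mem_parts hY0
  obtain ⟨X0, hX0, hi0X0⟩ := ξ.exists_mem (Finset.mem_univ i0)
  obtain ⟨j0, hj0Y0, hj0X0⟩ := Finset.not_subset.mp (hno X0 hX0)
  set u0 : (i : Fin n) → Fin (d i) := fun i => ⟨0, pos i⟩ with hu0
  set v : (i : Fin n) → Fin (d i) :=
    fun k => if k ∈ Y0 then ⟨1, hd k⟩ else ⟨0, pos k⟩ with hv
  set w : (i : Fin n) → Fin (d i) :=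
    fun k => if k ∈ Y0 ∧ k ∈ X0 then ⟨1, hd k⟩ else ⟨0, pos k⟩ with hw
  have hψu0 : ψ u0 ≠ 0 := by
    rw [hψ]
    refine Finset.prod_ne_zero_iff.mpr fun Y hY => ?_
    have hz : (fun i : Y => u0 i.1) = z0 Y := by
      funext i; rw [hu0, hz0]
    rw [hg]
    simp only [hz, eq_self_iff_true, true_or, if_true]
    exact hcne
  have hψv : ψ v ≠ 0 := by
    rw [hψ]
    refine Finset.prod_ne_zero_iff.mpr fun Y hY => ?_
    rw [hg]
    simp only
    by_cases hYY : Y = Y0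
    · have hz : (fun i : Y => v i.1) = z1 Y := by
        funext i; rw [hv, hz1]; simp only
        rw [if_pos (show i.1 ∈ Y0 from hYY ▸ i.2)]
      simp only [hz, eq_self_iff_true, or_true, if_true]
      exact hcne
    · have hnotin : ∀ i : Y, i.1 ∉ Y0 :=
        fun i => Finset.disjoint_left.mp (υ.disjoint hY hY0 hYY) i.2
      have hz : (fun i : Y => v i.1) = z0 Y := by
        funext i; rw [hv, hz0]; simp only
        rw [if_neg (hnotin i)]
      simp only [hz, eq_self_iff_true, true_or, if_true]
      exact hcne
  have hψw : ψ w = 0 := by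
    rw [hψ]
    refine Finset.prod_eq_zero hY0 ?_
    rw [hg]
    simp only
    rw [if_neg ?_]
    rintro (h | h)
    · have h' := congrFun h ⟨i0, hi0⟩
      rw [hw, hz0] at h'
      simp only at h'
      rw [if_pos ⟨hi0, hi0X0⟩] at h'
      simp [Fin.ext_iff] at h'
    · have h' := congrFun h ⟨j0, hj0Y0⟩
      rw [hw, hz1] at h'
      simp only at h'
      rw [if_neg (fun hc => hj0X0 hc.2)] at h'
      simp [Fin.ext_iff] at h'
  have hwv : (fun i : X0 => w i.1) = (fun i : X0 => v i.1) := by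
    funext i
    rw [hw, hv]
    simp only
    by_cases hY : i.1 ∈ Y0
    · rw [if_pos ⟨hY, i.2⟩, if_pos hY]
    · rw [if_neg (fun hc => hY hc.1), if_neg hY]
  have hwu : ∀ X ∈ ξ.parts, X ≠ X0 →
      (fun i : X => w i.1) = (fun i : X => u0 i.1) := by
    intro X hX hne
    funext i
    have hnot : i.1 ∉ X0 := Finset.disjoint_left.mp (ξ.disjoint hX hX0 hne) i.2
    rw [hw, hu0]
    simp only
    rw [if_neg (fun hc => hnot hc.2)]
  have h00 : (0:ℂ) = ∏ X ∈ ξ.parts, τ X (fun i => w i.1) (fun i => w i.1) := by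
    rw [← hτ w w, hρ]
    simp only [Matrix.of_apply]
    rw [hψw]
    simp
  rw [← Finset.mul_prod_erase ξ.parts _ hX0, hwv] at h00
  have herase : ∏ X ∈ ξ.parts.erase X0, τ X (fun i : X => w i.1) (fun i => w i.1)
      = ∏ X ∈ ξ.parts.erase X0, τ X (fun i : X => u0 i.1) (fun i => u0 i.1) := by
    refine Finset.prod_congr rfl fun X hX => ?_
    rw [hwu X (Finset.mem_of_mem_erase hX) (Finset.ne_of_mem_erase hX)]
  rw [herase] at h00
  have hconj : ∀ z : ℂ, z ≠ 0 → (starRingEnd ℂ) z ≠ 0 := by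
    intro z hz h0
    exact hz (by simpa using congrArg (starRingEnd ℂ) h0)
  have hvv : τ X0 (fun i : X0 => v i.1) (fun i => v i.1) ≠ 0 := by
    intro h0
    have hz : ρ v v = 0 := by
      rw [hτ v v]
      exact Finset.prod_eq_zero hX0 h0
    rw [hρ] at hz
    simp only [Matrix.of_apply] at hz
    exact (mul_ne_zero hψv (hconj _ hψv)) hz
  have huu : ∏ X ∈ ξ.parts.erase X0, τ X (fun i : X => u0 i.1) (fun i => u0 i.1) ≠ 0 := by
    refine Finset.prod_ne_zero_iff.mpr fun X hX h0 => ?_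
    have hz : ρ u0 u0 = 0 := by
      rw [hτ u0 u0]
      exact Finset.prod_eq_zero (Finset.mem_of_mem_erase hX) h0
    rw [hρ] at hz
    simp only [Matrix.of_apply] at hz
    exact (mul_ne_zero hψu0 (hconj _ hψu0)) hz
  exact (mul_ne_zero hvv huu) h00.symm

/-- A partition `υ` refines `ξ` iff every `υ`-uncorrelated state is
`ξ`-uncorrelated: the map `ξ ↦ D(ξ)` is an order embedding from the
refinement lattice of partitions to state sets. -/
theorem refines_iff_uncorrelated_subset
    (hn : 2 ≤ n) (hd : ∀ i, 1 < d i)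
    (υ ξ : Finpartition (Finset.univ : Finset (Fin n))) :
    υ ≤ ξ ↔ uncorrelatedStates d υ ⊆ uncorrelatedStates d ξ := by
  exact ⟨aux_forward (fun i => Nat.lt_trans Nat.zero_lt_one (hd i)) υ ξ,
    aux_backward hd υ ξ⟩

end Main
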